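/- Let R = (r_{n,k})_{0≤k≤n≤N} be a lower triangular matrix with entries in an integral domain with all diagonal entries r_{n,n} = 1. Then there exists a unique family of polynomials (d_n)_{n=0}^N such that d_0 = 1, each d_n is palindromic with I_n(d_n) = d_n, and the polynomials H_n := Σ_{k=0}^n r_{n,k} d_k satisfy I_n(H_n) = t·H_n for all 1 ≤ n ≤ N. Moreover the d_n satisfy the recursion d_n = t·S_{n-1}(Σ_{k=0}^{n-1} r_{n,k} d_k) for n ≥ 1. -/

import Mathlib

open Polynomial

/-- `Spoly n f = (Iₙ(f) - f)/(t-1)` where `Iₙ(f)(t) = tⁿ f(1/t)` is the reversal. -/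
noncomputable def Spoly {R : Type*} [CommRing R] (n : ℕ) (f : R[X]) : R[X] :=
  (reflect n f - f) /ₘ (X - C 1)

/-- `d` is a family of Chow-derangement polynomials for the lower triangular matrix
`r` (up to index `N`): `d 0 = 1`, each `d n` is palindromic (`Iₙ(dₙ) = dₙ`), and
the Chow polynomials `Hₙ = Σ_{k≤n} r n k • d k` satisfy `Iₙ(Hₙ) = t·Hₙ` for `1 ≤ n ≤ N`. -/
def ChowDerFamily {R : Type*} [CommRing R] (N : ℕ) (r : ℕ → ℕ → R) (d : ℕ → R[X]) : Prop :=
  d 0 = 1 ∧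
  (∀ n ≤ N, (d n).natDegree ≤ n) ∧
  (∀ n ≤ N, reflect n (d n) = d n) ∧
  (∀ n, 1 ≤ n → n ≤ N →
    reflect n (∑ k ∈ Finset.range (n + 1), C (r n k) * d k) =
      X * ∑ k ∈ Finset.range (n + 1), C (r n k) * d k)

namespace ChowAux

variable {R : Type*} [CommRing R]

lemma reflect_reflect (N : ℕ) (f : R[X]) : reflect N (reflect N f) = f := by
  ext i; rw [coeff_reflect, coeff_reflect, revAt_invol]

lemma natDegree_reflect_le {N : ℕ} {f : R[X]} (h : f.natDegree ≤ N) :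
    (reflect N f).natDegree ≤ N := by
  apply natDegree_le_iff_coeff_eq_zero.mpr
  intro i hi
  rw [coeff_reflect, revAt_eq_self_of_lt hi]
  exact coeff_eq_zero_of_natDegree_lt (lt_of_le_of_lt h hi)

lemma reflect_idx_zero (f : R[X]) : reflect 0 f = f := by
  ext i
  rw [coeff_reflect]
  rcases Nat.eq_zero_or_pos i with h | h
  · simp [h]
  · rw [revAt_eq_self_of_lt h]

lemma eval_one_reflect {N : ℕ} {f : R[X]} (h : f.natDegree ≤ N) :
    (reflect N f).eval 1 = f.eval 1 := by
  rw [eval_eq_sum_range' (Nat.lt_succ_of_le (natDegree_reflect_le h)),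
      eval_eq_sum_range' (Nat.lt_succ_of_le h)]
  simp only [one_pow, mul_one]
  rw [← Finset.sum_range_reflect (fun i => f.coeff i) (N + 1)]
  refine Finset.sum_congr rfl fun i hi => ?_
  rw [coeff_reflect, revAt_le (Nat.le_of_lt_succ (Finset.mem_range.mp hi))]
  congr 1

lemma reflect_succ {m : ℕ} {s : R[X]} (hs : s.natDegree ≤ m) :
    reflect (m + 1) s = X * reflect m s := by
  ext i
  cases i with
  | zero =>
      rw [coeff_reflect, revAt_le (Nat.zero_le _), Nat.sub_zero, mul_coeff_zero]
      simp [coeff_eq_zero_of_natDegree_lt (Nat.lt_succ_of_le hs)]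
  | succ j =>
      rw [coeff_reflect, coeff_X_mul, coeff_reflect]
      by_cases hj : j ≤ m
      · rw [revAt_le hj, revAt_le (by omega : j + 1 ≤ m + 1)]
        congr 1
        omega
      · rw [revAt_eq_self_of_lt (by omega), revAt_eq_self_of_lt (by omega),
          coeff_eq_zero_of_natDegree_lt (by omega), coeff_eq_zero_of_natDegree_lt (by omega)]

variable [IsDomain R]

lemma spoly_mul {m : ℕ} {g : R[X]} (hg : g.natDegree ≤ m) :
    (X - C 1) * Spoly m g = reflect m g - g := by
  have h := modByMonic_add_div (reflect m g - g) (X - C (1 : R))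
  rw [modByMonic_X_sub_C_eq_C_eval] at h
  have he : (reflect m g - g).eval 1 = 0 := by
    rw [eval_sub, eval_one_reflect hg, sub_self]
  rw [he, C_0, zero_add] at h
  exact h

lemma spoly_natDegree_le {m : ℕ} {g : R[X]} (hg : g.natDegree ≤ m) :
    (Spoly m g).natDegree ≤ m - 1 := by
  unfold Spoly
  rw [natDegree_divByMonic _ (monic_X_sub_C (1 : R)), natDegree_X_sub_C]
  have : (reflect m g - g).natDegree ≤ m :=
    le_trans (natDegree_sub_le _ _) (max_le (natDegree_reflect_le hg) hg)
  omega

lemma spoly_zero {g : R[X]} : Spoly 0 g = 0 := by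
  unfold Spoly
  rw [reflect_idx_zero, sub_self, zero_divByMonic]

lemma spoly_palindrome {m : ℕ} {g : R[X]} (hg : g.natDegree ≤ m) :
    reflect (m - 1) (Spoly m g) = Spoly m g := by
  cases m with
  | zero => simp [spoly_zero]
  | succ m' =>
      set s := Spoly (m' + 1) g with hs
      have hdeg : s.natDegree ≤ m' := spoly_natDegree_le hg
      have h1 : (X - C 1) * s = reflect (m' + 1) g - g := spoly_mul hg
      have h2 : reflect (m' + 1) ((X - C 1) * s) = reflect 1 (X - C 1) * reflect m' s := by
        have := reflect_mul (X - C 1) s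
          (le_trans (natDegree_sub_le _ _) (by simp) : (X - C (1:R)).natDegree ≤ 1) hdeg
        rwa [add_comm 1 m'] at this
      have h3 : reflect 1 (X - C (1 : R)) = -(X - C 1) := by
        rw [reflect_sub, reflect_C]
        simp
        try ring
      have h4 : reflect (m' + 1) (reflect (m' + 1) g - g) = -(reflect (m' + 1) g - g) := by
        rw [reflect_sub, reflect_reflect]
        ring
      have key : (X - C 1) * reflect m' s = (X - C 1) * s := by
        have h5 := congrArg (reflect (m' + 1)) h1
        rw [h2, h3, h4, ← h1] at h5
        rw [neg_mul] at h5
        exact neg_inj.mp h5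
      have hXC : (X - C (1 : R)) ≠ 0 := X_sub_C_ne_zero 1
      simpa using mul_left_cancel₀ hXC key

lemma reflect_spoly {m : ℕ} {g : R[X]} (hg : g.natDegree ≤ m) :
    reflect m (Spoly m g) = X * Spoly m g := by
  cases m with
  | zero => simp [spoly_zero]
  | succ m' =>
      have hd : (Spoly (m' + 1) g).natDegree ≤ m' := spoly_natDegree_le hg
      rw [reflect_succ hd]
      congr 1
      exact spoly_palindrome hg

lemma step (m : ℕ) (g : R[X]) (hg : g.natDegree ≤ m) :
    (X * Spoly m g).natDegree ≤ m + 1 ∧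
    reflect (m + 1) (X * Spoly m g) = X * Spoly m g ∧
    reflect (m + 1) (g + X * Spoly m g) = X * (g + X * Spoly m g) := by
  have hsm : (Spoly m g).natDegree ≤ m := le_trans (spoly_natDegree_le hg) (Nat.sub_le m 1)
  have hX : (X : R[X]).natDegree ≤ 1 := natDegree_X_le
  have hrefl : reflect (m + 1) (X * Spoly m g) = X * Spoly m g := by
    have h := reflect_mul (X : R[X]) (Spoly m g) hX hsm
    rw [add_comm 1 m] at h
    rw [h, reflect_one_X, one_mul, reflect_spoly hg]
  refine ⟨?_, hrefl, ?_⟩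
  · refine le_trans natDegree_mul_le ?_
    omega
  · rw [reflect_add, hrefl, reflect_succ hg]
    have h1 : reflect m g = g + (X - C 1) * Spoly m g := by
      rw [spoly_mul hg]; ring
    rw [h1, C_1]; ring

variable (r : ℕ → ℕ → R)

noncomputable def dfam : ℕ → R[X]
  | 0 => 1
  | (n + 1) => X * Spoly n (∑ k ∈ (Finset.range (n + 1)).attach,
      C (r (n + 1) k.1) * dfam k.1)
  termination_by n => n
  decreasing_by exact Finset.mem_range.mp k.2

lemma dfam_zero : dfam r 0 = 1 := by rw [dfam]

lemma dfam_succ (n : ℕ) :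
    dfam r (n + 1) = X * Spoly n (∑ k ∈ Finset.range (n + 1), C (r (n + 1) k) * dfam r k) := by
  rw [dfam, ← Finset.sum_attach (Finset.range (n + 1)) (fun k => C (r (n + 1) k) * dfam r k)]

lemma dfam_prop (n : ℕ) : (dfam r n).natDegree ≤ n ∧ reflect n (dfam r n) = dfam r n := by
  induction n using Nat.strong_induction_on with
  | _ n ih =>
    cases n with
    | zero => exact ⟨by simp [dfam_zero], by rw [dfam_zero, reflect_idx_zero]⟩
    | succ m =>
      have hg : (∑ k ∈ Finset.range (m + 1), C (r (m + 1) k) * dfam r k).natDegree ≤ m := by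
        refine natDegree_sum_le_of_forall_le _ _ fun k hk => ?_
        refine le_trans (natDegree_C_mul_le _ _) (le_trans (ih k (Finset.mem_range.mp hk)).1 ?_)
        exact Nat.lt_succ_iff.mp (Finset.mem_range.mp hk)
      obtain ⟨h1, h2, -⟩ := step m _ hg
      rw [dfam_succ]
      exact ⟨h1, h2⟩

lemma dfam_gdeg (n : ℕ) :
    (∑ k ∈ Finset.range (n + 1), C (r (n + 1) k) * dfam r k).natDegree ≤ n := by
  refine natDegree_sum_le_of_forall_le _ _ fun k hk => ?_
  exact le_trans (natDegree_C_mul_le _ _) (le_trans (dfam_prop r k).1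
    (Nat.lt_succ_iff.mp (Finset.mem_range.mp hk)))

end ChowAux

open ChowAux

theorem stmt2 {R : Type*} [CommRing R] [IsDomain R] (N : ℕ) (r : ℕ → ℕ → R)
    (htri : ∀ n k, n < k → r n k = 0) (hdiag : ∀ n ≤ N, r n n = 1) :
    (∃ d : ℕ → R[X], ChowDerFamily N r d ∧
      ∀ n, 1 ≤ n → n ≤ N →
        d n = X * Spoly (n - 1) (∑ k ∈ Finset.range n, C (r n k) * d k)) ∧
    (∀ d d' : ℕ → R[X], ChowDerFamily N r d → ChowDerFamily N r d' →
      ∀ n ≤ N, d n = d' n) := by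
  constructor
  · refine ⟨dfam r, ⟨dfam_zero r, fun n _ => (dfam_prop r n).1, fun n _ => (dfam_prop r n).2,
      ?_⟩, ?_⟩
    · intro n h1 hN
      cases n with
      | zero => omega
      | succ m =>
        rw [Finset.sum_range_succ, hdiag (m + 1) hN, C_1, one_mul, dfam_succ]
        exact (step m _ (dfam_gdeg r m)).2.2
    · intro n h1 hN
      cases n with
      | zero => omega
      | succ m => exact dfam_succ r m
  · intro d d' hd hd' n
    induction n using Nat.strong_induction_on with
    | _ n ih =>
      intro hN
      obtain ⟨hd0, hdeg, hpal, hch⟩ := hd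
      obtain ⟨hd0', hdeg', hpal', hch'⟩ := hd'
      cases n with
      | zero => rw [hd0, hd0']
      | succ m =>
        have hsum : ∀ k ∈ Finset.range (m + 1),
            C (r (m + 1) k) * d k = C (r (m + 1) k) * d' k := by
          intro k hk
          have hk' := Finset.mem_range.mp hk
          rw [ih k hk' (by omega)]
        have hHdiff : (∑ k ∈ Finset.range (m + 2), C (r (m + 1) k) * d k) -
            (∑ k ∈ Finset.range (m + 2), C (r (m + 1) k) * d' k) =
            d (m + 1) - d' (m + 1) := by
          rw [Finset.sum_range_succ (fun k => C (r (m + 1) k) * d k) (m + 1),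
            Finset.sum_range_succ (fun k => C (r (m + 1) k) * d' k) (m + 1),
            Finset.sum_congr rfl hsum, hdiag (m + 1) hN, C_1, one_mul, one_mul]
          ring
        have h6 : reflect (m + 1) (d (m + 1) - d' (m + 1)) =
            X * (d (m + 1) - d' (m + 1)) := by
          have h := congrArg₂ (· - ·) (hch (m + 1) (by omega) hN) (hch' (m + 1) (by omega) hN)
          rw [← reflect_sub, ← mul_sub, hHdiff] at h
          exact h
        have h7 : reflect (m + 1) (d (m + 1) - d' (m + 1)) = d (m + 1) - d' (m + 1) := by
          rw [reflect_sub, hpal (m + 1) hN, hpal' (m + 1) hN]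
        have h8 : (1 - X : R[X]) * (d (m + 1) - d' (m + 1)) = 0 := by
          rw [sub_mul, one_mul, sub_eq_zero]
          exact h7.symm.trans h6
        have h10 : (1 - X : R[X]) ≠ 0 := by
          intro h
          apply X_sub_C_ne_zero (R := R) 1
          rw [C_1]
          linear_combination -h
        have hE0 : d (m + 1) - d' (m + 1) = 0 := by
          rcases mul_eq_zero.mp h8 with h | h
          · exact absurd h h10
          · exact h
        exact sub_eq_zero.mp hE0
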